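/- Define G₂(τ) for τ ≥ 0 by G₂(0)=0 and G₂'(τ) = (1/(2π)) H(τ − 1/2) (tanh(π√(τ² − 1/4)) − 1) τ, where H is the Heaviside step function. Then G₂ is nonpositive, nonincreasing in absolute value bounded, and sup_{τ≥0} |G₂(τ)| ≤ 1/(48π). -/

import Mathlib

open Real MeasureTheory

/-- The derivative G₂'(τ) = (1/(2π)) H(τ − 1/2)(tanh(π√(τ²−1/4)) − 1) τ. -/
noncomputable def G2deriv (τ : ℝ) : ℝ :=
  (1 / (2 * π)) * (if (1:ℝ)/2 ≤ τ then 1 else 0) *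
    (Real.tanh (π * Real.sqrt (τ ^ 2 - 1/4)) - 1) * τ

/-- G₂(τ) = ∫_0^τ G₂'(s) ds. -/
noncomputable def G2 (τ : ℝ) : ℝ := ∫ s in (0:ℝ)..τ, G2deriv s

open Set

section aux
lemma eta2 : HasSum (fun n : ℕ => (-1:ℝ)^n / ((n:ℝ)+1)^2) (π^2/12) := by
  have hz := hasSum_zeta_two
  set g : ℕ → ℝ := fun n => (-1:ℝ)^n / ((n:ℝ)+1)^2 with hg
  have he : HasSum (fun k : ℕ => (1:ℝ) / ((2*(k:ℝ)))^2) (π^2/6 * (1/4)) := by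
    refine (hz.mul_right (1/4)).congr_fun fun k => ?_
    rcases Nat.eq_zero_or_pos k with h | h
    · simp [h]
    · have : (k:ℝ) ≠ 0 := by positivity
      field_simp; ring
  have hodd_summ : Summable (fun k : ℕ => (1:ℝ) / ((2*(k:ℝ)+1))^2) := by
    have := hz.summable.comp_injective (i := fun k : ℕ => 2*k+1)
      (fun a b hab => by simp only at hab; omega)
    refine this.congr fun k => ?_
    simp [Function.comp]
  have ho : HasSum (fun k : ℕ => (1:ℝ) / ((2*(k:ℝ)+1))^2) (π^2/6 - π^2/6 * (1/4)) := by
    have h1 := hodd_summ.hasSum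
    have h2 : HasSum (fun n : ℕ => (1:ℝ)/(n:ℝ)^2)
        (π^2/6 * (1/4) + ∑' k : ℕ, (1:ℝ) / ((2*(k:ℝ)+1))^2) := by
      refine HasSum.even_add_odd (he.congr_fun fun k => by push_cast; ring_nf)
        (h1.congr_fun fun k => by push_cast; ring_nf)
    have := hz.unique h2
    have h3 : ∑' k : ℕ, (1:ℝ) / ((2*(k:ℝ)+1))^2 = π^2/6 - π^2/6 * (1/4) := by linarith
    rwa [h3] at h1
  have hshift : HasSum (fun n : ℕ => (1:ℝ)/((n:ℝ)+1)^2) (π^2/6) := by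
    rw [show (fun n : ℕ => (1:ℝ)/((n:ℝ)+1)^2) = (fun n : ℕ => (1:ℝ)/(((n+1:ℕ)):ℝ)^2) by
      funext n; push_cast; ring_nf]
    rw [hasSum_nat_add_iff (f := fun n : ℕ => (1:ℝ)/(n:ℝ)^2) 1]
    simpa using hz
  have geven : HasSum (fun k : ℕ => g (2*k)) (π^2/6 - π^2/6 * (1/4)) := by
    refine ho.congr_fun fun k => ?_
    simp only [hg, pow_mul]
    push_cast
    norm_num
  have godd : HasSum (fun k : ℕ => g (2*k+1)) (π^2/6 * (-(1/4))) := by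
    refine ((hshift.mul_right (-(1/4))).congr_fun fun k => ?_)
    simp only [hg, pow_succ, pow_mul]
    push_cast
    norm_num
    field_simp
    ring
  have hfin := geven.even_add_odd godd
  convert hfin using 1
  ring


lemma integ_base_int {c : ℝ} (hc : 0 < c) :
    IntegrableOn (fun u : ℝ => u * Real.exp (-(c*u))) (Ioi 0) := by
  have h := integrableOn_rpow_mul_exp_neg_mul_rpow (p := 1) (s := 1) (b := c) (by norm_num) (by norm_num) hc
  refine h.congr_fun (fun x hx => ?_) measurableSet_Ioi
  simp only [Real.rpow_one, neg_mul]

lemma integ_base_val {c : ℝ} (hc : 0 < c) :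
    ∫ u in Ioi (0:ℝ), u * Real.exp (-(c*u)) = 1/c^2 := by
  have h := Real.integral_rpow_mul_exp_neg_mul_Ioi (a := 2) (r := c) (by norm_num) hc
  rw [Real.Gamma_two, mul_one] at h
  have h2 : ((1:ℝ)/c) ^ (2:ℝ) = 1/c^2 := by
    rw [show (2:ℝ) = ((2:ℕ):ℝ) by norm_num, Real.rpow_natCast]
    rw [div_pow, one_pow]
  rw [h2] at h
  rw [← h]
  refine setIntegral_congr_fun measurableSet_Ioi (fun x hx => ?_)
  rw [show ((2:ℝ)-1) = 1 by norm_num, Real.rpow_one]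

lemma one_sub_tanh (x : ℝ) :
    1 - Real.tanh x = 2 * Real.exp (-(2*x)) / (1 + Real.exp (-(2*x))) := by
  rw [Real.tanh_eq_sinh_div_cosh, Real.sinh_eq, Real.cosh_eq]
  have h1 : Real.exp x + Real.exp (-x) > 0 := by positivity
  have h2 : (1:ℝ) + Real.exp (-(2*x)) > 0 := by positivity
  field_simp
  rw [show -(x*2) = (-x) + (-x) by ring, Real.exp_add]
  have hx : Real.exp x * Real.exp (-x) = 1 := by rw [← Real.exp_add]; simp
  ring_nf
  nlinarith [hx]



noncomputable def F (n : ℕ) (u : ℝ) : ℝ := (2 * (-1:ℝ)^n) * (u * Real.exp (-(2*π*((n:ℝ)+1)*u)))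

lemma F_hasSum {u : ℝ} (hu : 0 < u) :
    HasSum (fun n => F n u) (u * (1 - Real.tanh (π*u))) := by
  set r := Real.exp (-(2*π*u)) with hr
  have hr0 : 0 < r := Real.exp_pos _
  have hr1 : r < 1 := by
    rw [hr, Real.exp_lt_one_iff]
    have := Real.pi_pos
    nlinarith
  have hgeo := hasSum_geometric_of_norm_lt_one (ξ := -r)
    (by rw [norm_neg, Real.norm_eq_abs, abs_of_pos hr0]; exact hr1)
  have h := hgeo.mul_left (2*u*r)
  have heq : (1 - -r)⁻¹ = (1+r)⁻¹ := by ring_nf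
  rw [heq] at h
  have h2 : u * (1 - Real.tanh (π*u)) = 2*u*r * (1+r)⁻¹ := by
    rw [one_sub_tanh (π*u), hr]
    rw [show 2*(π*u) = 2*π*u by ring]
    field_simp
  rw [h2]
  refine h.congr_fun fun n => ?_
  show (2 * (-1:ℝ)^n) * (u * Real.exp (-(2*π*((n:ℝ)+1)*u))) = 2*u*r * (-r)^n
  rw [hr]
  rw [show ((-Real.exp (-(2*π*u)))^n : ℝ) = (-1)^n * Real.exp ((n:ℝ) * (-(2*π*u))) by
    rw [neg_pow, ← Real.exp_nat_mul]]
  rw [show -(2*π*((n:ℝ)+1)*u) = -(2*π*u) + (n:ℝ) * (-(2*π*u)) by ring, Real.exp_add]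
  ring

lemma key1 : ∫ u in Ioi (0:ℝ), u * (1 - Real.tanh (π*u)) = 1/24 := by
  have hπ := Real.pi_pos
  have hc : ∀ n : ℕ, (0:ℝ) < 2*π*((n:ℝ)+1) := fun n => by positivity
  have hFint : ∀ n : ℕ, IntegrableOn (F n) (Ioi 0) := fun n =>
    ((integ_base_int (hc n)).const_mul _)
  have hFval : ∀ n : ℕ, ∫ u in Ioi (0:ℝ), F n u = (2 * (-1:ℝ)^n) * (1/(2*π*((n:ℝ)+1))^2) := by
    intro n
    unfold F
    rw [integral_const_mul, integ_base_val (hc n)]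
  -- measurability
  have hFmeas : ∀ n : ℕ, AEStronglyMeasurable (F n) (volume.restrict (Ioi 0)) := fun n =>
    (hFint n).aestronglyMeasurable
  have hnorm : ∀ n : ℕ, ∫ u in Ioi (0:ℝ), ‖F n u‖ = 2 * (1/(2*π*((n:ℝ)+1))^2) := by
    intro n
    rw [show (2:ℝ) * (1/(2*π*((n:ℝ)+1))^2) = 2 * ∫ u in Ioi (0:ℝ), u * Real.exp (-(2*π*((n:ℝ)+1)*u)) from by rw [integ_base_val (hc n)]]
    rw [← integral_const_mul]
    refine setIntegral_congr_fun measurableSet_Ioi (fun x hx => ?_)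
    unfold F
    rw [Real.norm_eq_abs, abs_mul]
    have hx0 : (0:ℝ) < x := hx
    rw [abs_of_pos (by positivity : (0:ℝ) < x * Real.exp (-(2*π*((n:ℝ)+1)*x)))]
    rw [abs_mul, abs_pow, abs_neg, abs_one, one_pow, mul_one, abs_two]
  have hsummable : Summable (fun n : ℕ => (2:ℝ) * (1/(2*π*((n:ℝ)+1))^2)) := by
    have h0 : Summable (fun n : ℕ => (1:ℝ)/((n:ℝ)+1)^2) := by
      have := (summable_nat_add_iff (f := fun n : ℕ => (1:ℝ)/(n:ℝ)^2) 1).2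
        (Real.summable_one_div_nat_pow.2 (by norm_num))
      refine this.congr fun n => by push_cast; ring
    refine (h0.mul_left (2 * (1/(2*π)^2))).congr fun n => ?_
    field_simp
  have hlint : ∑' n : ℕ, ∫⁻ u in Ioi (0:ℝ), ‖F n u‖₊ ≠ ⊤ := by
    have : ∀ n : ℕ, ∫⁻ u in Ioi (0:ℝ), ‖F n u‖₊ = ENNReal.ofReal (2 * (1/(2*π*((n:ℝ)+1))^2)) := by
      intro n
      show ∫⁻ u in Ioi (0:ℝ), ‖F n u‖ₑ = _
      rw [← MeasureTheory.ofReal_integral_norm_eq_lintegral_enorm (hFint n), hnorm n]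
    simp_rw [this]
    rw [← ENNReal.ofReal_tsum_of_nonneg (fun n => by positivity) hsummable]
    exact ENNReal.ofReal_ne_top
  have hint := MeasureTheory.integral_tsum hFmeas hlint
  have hlhs : ∫ u in Ioi (0:ℝ), u * (1 - Real.tanh (π*u)) = ∫ u in Ioi (0:ℝ), ∑' n : ℕ, F n u := by
    refine setIntegral_congr_fun measurableSet_Ioi (fun u hu => ?_)
    exact ((F_hasSum hu).tsum_eq).symm
  rw [hlhs, hint]
  simp_rw [hFval]
  have hfin : HasSum (fun n : ℕ => (2 * (-1:ℝ)^n) * (1/(2*π*((n:ℝ)+1))^2)) (1/24 : ℝ) := by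
    have h := eta2.mul_left (1/(2*π^2))
    have hv : (1:ℝ)/(2*π^2) * (π^2/12) = 1/24 := by
      field_simp
      ring
    rw [hv] at h
    refine h.congr_fun fun n => ?_
    have hπ' : π ≠ 0 := Real.pi_ne_zero
    field_simp
  exact hfin.tsum_eq



lemma sqrt_quarter : Real.sqrt (1/4) = 1/2 := by
  rw [show (1:ℝ)/4 = (1/2)^2 by norm_num, Real.sqrt_sq (by norm_num)]

lemma key2 : ∫ s in Ioi ((1:ℝ)/2), s * (1 - Real.tanh (π * Real.sqrt (s^2 - 1/4))) = 1/24 := by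
  set f : ℝ → ℝ := fun u => Real.sqrt (u^2 + 1/4) with hf
  set f' : ℝ → ℝ := fun u => u / Real.sqrt (u^2 + 1/4) with hf'
  have hpos : ∀ u : ℝ, (0:ℝ) < u^2 + 1/4 := fun u => by positivity
  have hd : ∀ x ∈ Ioi (0:ℝ), HasDerivWithinAt f (f' x) (Ioi 0) x := by
    intro x hx
    have h1 : HasDerivAt (fun u : ℝ => u^2 + 1/4) (2*x) x := by
      simpa using ((hasDerivAt_pow 2 x).add_const (1/4))
    have h2 := (Real.hasDerivAt_sqrt (ne_of_gt (hpos x))).comp x h1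
    have : (1 / (2 * Real.sqrt (x^2+1/4))) * (2*x) = f' x := by
      rw [hf']
      have : Real.sqrt (x^2+1/4) > 0 := Real.sqrt_pos.2 (hpos x)
      field_simp
    rw [← this]
    exact (h2.congr_deriv rfl).hasDerivWithinAt
  have hinj : InjOn f (Ioi 0) := by
    intro a ha b hb hab
    have ha' : (0:ℝ) < a := ha
    have hb' : (0:ℝ) < b := hb
    have h1 : a^2 + 1/4 = b^2 + 1/4 := (Real.sqrt_inj (hpos a).le (hpos b).le).1 hab
    nlinarith
  have himg : f '' Ioi 0 = Ioi ((1:ℝ)/2) := by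
    ext s
    constructor
    · rintro ⟨u, hu, rfl⟩
      have hu' : (0:ℝ) < u := hu
      have : Real.sqrt (1/4) < Real.sqrt (u^2 + 1/4) :=
        Real.sqrt_lt_sqrt (by norm_num) (by nlinarith)
      rwa [sqrt_quarter] at this
    · intro hs
      have hs' : (1:ℝ)/2 < s := hs
      refine ⟨Real.sqrt (s^2 - 1/4), ?_, ?_⟩
      · have : (0:ℝ) < s^2 - 1/4 := by nlinarith
        exact Real.sqrt_pos.2 this
      · have h1 : (0:ℝ) ≤ s^2 - 1/4 := by nlinarith
        show Real.sqrt ((Real.sqrt (s^2-1/4))^2 + 1/4) = s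
        rw [Real.sq_sqrt h1]
        rw [show s^2 - 1/4 + 1/4 = s^2 by ring, Real.sqrt_sq (by linarith)]
  have := integral_image_eq_integral_abs_deriv_smul measurableSet_Ioi hd hinj
    (fun s => s * (1 - Real.tanh (π * Real.sqrt (s^2 - 1/4))))
  rw [himg] at this
  rw [this, ← key1]
  refine setIntegral_congr_fun measurableSet_Ioi (fun u hu => ?_)
  have hu' : (0:ℝ) < u := hu
  have hs : Real.sqrt (u^2+1/4) > 0 := Real.sqrt_pos.2 (hpos u)
  rw [smul_eq_mul, hf', hf]
  rw [Real.sq_sqrt (hpos u).le, show u^2 + 1/4 - 1/4 = u^2 by ring, Real.sqrt_sq hu'.le]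
  rw [abs_of_pos (by positivity)]
  field_simp





lemma tanh_le_one (x : ℝ) : Real.tanh x ≤ 1 := by
  have h := one_sub_tanh x
  have h2 : (0:ℝ) < 2 * Real.exp (-(2*x)) / (1 + Real.exp (-(2*x))) := by positivity
  linarith

lemma G2deriv_nonpos (s : ℝ) : G2deriv s ≤ 0 := by
  unfold G2deriv
  split_ifs with h
  · have h1 : Real.tanh (π * Real.sqrt (s ^ 2 - 1/4)) - 1 ≤ 0 := by
      linarith [tanh_le_one (π * Real.sqrt (s ^ 2 - 1/4))]
    have h2 : (0:ℝ) < 1 / (2*π) := by positivity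
    have h3 : (0:ℝ) ≤ s := by linarith
    have h4 : 1 / (2*π) * 1 * (Real.tanh (π * Real.sqrt (s ^ 2 - 1/4)) - 1) ≤ 0 := by
      rw [mul_one]
      exact mul_nonpos_iff.2 (Or.inl ⟨h2.le, h1⟩)
    exact mul_nonpos_iff.2 (Or.inr ⟨h4, h3⟩)
  · simp

lemma measurable_G2deriv : Measurable G2deriv := by
  unfold G2deriv
  refine ((measurable_const.mul ?_).mul ?_).mul measurable_id
  · exact Measurable.ite measurableSet_Ici measurable_const measurable_const
  · refine Measurable.sub ?_ measurable_const
    have htanh : Continuous Real.tanh := by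
      rw [funext Real.tanh_eq_sinh_div_cosh]
      exact Real.continuous_sinh.div Real.continuous_cosh (fun x => (Real.cosh_pos x).ne')
    exact (htanh.comp (continuous_const.mul
      (Real.continuous_sqrt.comp (by continuity)))).measurable

lemma G2deriv_bound {s : ℝ} (hs : 0 < s) :
    ‖G2deriv s‖ ≤ Real.exp π * ((1/π) * (s * Real.exp (-(2*π*s)))) := by
  have hπ := Real.pi_pos
  rcases le_or_gt ((1:ℝ)/2) s with h | h
  · have hw : Real.sqrt (s^2 - 1/4) ≥ s - 1/2 := by
      have h1 : (s-1/2)^2 ≤ s^2 - 1/4 := by nlinarith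
      calc s - 1/2 = Real.sqrt ((s-1/2)^2) := (Real.sqrt_sq (by linarith)).symm
        _ ≤ Real.sqrt (s^2 - 1/4) := Real.sqrt_le_sqrt h1
    set w := Real.sqrt (s^2 - 1/4) with hwdef
    have hw0 : 0 ≤ w := Real.sqrt_nonneg _
    have htanh : 1 - Real.tanh (π*w) ≤ 2 * Real.exp (-(2*(π*w))) := by
      rw [one_sub_tanh (π*w)]
      have h2 : (0:ℝ) < 1 + Real.exp (-(2*(π*w))) := by positivity
      rw [div_le_iff₀ h2]
      nlinarith [Real.exp_pos (-(2*(π*w)))]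
    have hnn : 0 ≤ 1 - Real.tanh (π*w) := by linarith [tanh_le_one (π*w)]
    unfold G2deriv
    rw [if_pos h]
    rw [Real.norm_eq_abs]
    have habs : |1 / (2 * π) * 1 * (Real.tanh (π * Real.sqrt (s ^ 2 - 1/4)) - 1) * s|
        = (1/(2*π)) * (1 - Real.tanh (π*w)) * s := by
      rw [← hwdef, abs_mul, abs_mul, abs_mul]
      rw [abs_of_pos (by positivity : (0:ℝ) < 1/(2*π)), abs_one, mul_one,
        abs_of_pos hs, abs_of_nonpos (by linarith : Real.tanh (π*w) - 1 ≤ 0)]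
      ring
    rw [habs]
    have hexp : Real.exp (-(2*(π*w))) ≤ Real.exp π * Real.exp (-(2*π*s)) := by
      rw [← Real.exp_add, Real.exp_le_exp]
      nlinarith
    calc (1/(2*π)) * (1 - Real.tanh (π*w)) * s
        ≤ (1/(2*π)) * (2 * (Real.exp π * Real.exp (-(2*π*s)))) * s := by
          have : 1 - Real.tanh (π*w) ≤ 2 * (Real.exp π * Real.exp (-(2*π*s))) := by
            nlinarith [Real.exp_pos (-(2*(π*w)))]
          have h1 : (0:ℝ) < 1/(2*π) := by positivity
          exact mul_le_mul_of_nonneg_right (mul_le_mul_of_nonneg_left this h1.le) hs.le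
      _ = Real.exp π * ((1/π) * (s * Real.exp (-(2*π*s)))) := by field_simp
  · unfold G2deriv
    rw [if_neg (by linarith)]
    simp only [mul_zero, zero_mul, norm_zero]
    positivity

lemma integrableOn_G2deriv : IntegrableOn G2deriv (Ioi 0) := by
  have hπ := Real.pi_pos
  have hB : IntegrableOn (fun s : ℝ => Real.exp π * ((1/π) * (s * Real.exp (-(2*π*s))))) (Ioi 0) := by
    refine (((integ_base_int (by positivity : (0:ℝ) < 2*π)).const_mul (1/π)).const_mul (Real.exp π))
  refine Integrable.mono hB measurable_G2deriv.aestronglyMeasurable ?_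
  refine (ae_restrict_iff' measurableSet_Ioi).2 (Filter.Eventually.of_forall fun s hs => ?_)
  have hs' : (0:ℝ) < s := hs
  rw [Real.norm_eq_abs (Real.exp π * _), abs_of_nonneg (by positivity)]
  exact G2deriv_bound hs

lemma integral_G2deriv_Ioi : ∫ s in Ioi (0:ℝ), (- G2deriv s) = 1/(48*π) := by
  have hπ := Real.pi_pos
  have heq : ∀ s : ℝ, - G2deriv s
      = (Ici ((1:ℝ)/2)).indicator (fun s => (1/(2*π)) * (s * (1 - Real.tanh (π * Real.sqrt (s^2 - 1/4))))) s := by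
    intro s
    unfold G2deriv
    rw [Set.indicator_apply]
    by_cases h : (1:ℝ)/2 ≤ s
    · rw [if_pos h, if_pos (by exact h)]
      ring
    · rw [if_neg h, if_neg (by exact h)]
      ring
  simp_rw [heq]
  rw [MeasureTheory.setIntegral_indicator measurableSet_Ici]
  rw [show Ioi (0:ℝ) ∩ Ici ((1:ℝ)/2) = Ici ((1:ℝ)/2) from
    Set.inter_eq_self_of_subset_right (fun x hx => lt_of_lt_of_le (by norm_num : (0:ℝ) < 1/2) hx)]
  rw [MeasureTheory.integral_Ici_eq_integral_Ioi]
  rw [MeasureTheory.integral_const_mul, key2]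
  field_simp
  ring

end aux

/-- G₂ is nonpositive, nonincreasing on [0,∞), and bounded by 1/(48π) in sup norm. -/
theorem G2_bounds :
    (∀ τ : ℝ, 0 ≤ τ → G2 τ ≤ 0) ∧
    (AntitoneOn G2 (Set.Ici 0)) ∧
    (∀ τ : ℝ, 0 ≤ τ → |G2 τ| ≤ 1 / (48 * π)) := by
  have hπ := Real.pi_pos
  have hint := integrableOn_G2deriv
  have hii : ∀ {a b : ℝ}, 0 ≤ a → a ≤ b → IntervalIntegrable G2deriv volume a b := by
    intro a b ha hab
    rw [intervalIntegrable_iff_integrableOn_Ioc_of_le hab]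
    exact hint.mono_set (fun x hx => lt_of_le_of_lt ha hx.1)
  have hnonpos : ∀ τ : ℝ, 0 ≤ τ → G2 τ ≤ 0 := by
    intro τ hτ
    have h := intervalIntegral.integral_nonneg (f := fun u => -G2deriv u) (μ := volume) hτ
      (fun u _ => neg_nonneg.2 (G2deriv_nonpos u))
    rw [intervalIntegral.integral_neg] at h
    unfold G2
    linarith
  refine ⟨hnonpos, ?_, ?_⟩
  · intro a ha b hb hab
    have h1 : G2 a + ∫ s in a..b, G2deriv s = G2 b :=
      intervalIntegral.integral_add_adjacent_intervals (hii le_rfl ha) (hii ha hab)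
    have h2 : ∫ s in a..b, G2deriv s ≤ 0 := by
      have h := intervalIntegral.integral_nonneg (f := fun u => -G2deriv u) (μ := volume) hab
        (fun u _ => neg_nonneg.2 (G2deriv_nonpos u))
      rw [intervalIntegral.integral_neg] at h
      linarith
    linarith
  · intro τ hτ
    rw [abs_of_nonpos (hnonpos τ hτ)]
    have h1 : -G2 τ = ∫ s in Set.Ioc (0:ℝ) τ, (-G2deriv s) := by
      unfold G2
      rw [← intervalIntegral.integral_neg, intervalIntegral.integral_of_le hτ]
    rw [h1, ← integral_G2deriv_Ioi]
    refine setIntegral_mono_set hint.neg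
      (Filter.Eventually.of_forall fun x => neg_nonneg.2 (G2deriv_nonpos x))
      (HasSubset.Subset.eventuallyLE (fun x hx => hx.1))
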